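/- Let 1 < p < 2 and D₁, D₃, D₄ > 0, D₂ < 0 with D₁ D₃ − D₂² > 0. Then there exist t > 1 and s > 0 such that t^{2-p} D₁ = t^p D₁ + s^p D₂ and s^{2-p} D₄ = s^p D₃ + t^p D₂. -/

import Mathlib

open Real

set_option maxHeartbeats 1200000 in
theorem stmt_12 (p : ℝ) (hp1 : 1 < p) (hp2 : p < 2)
    (D₁ D₂ D₃ D₄ : ℝ) (hD₁ : 0 < D₁) (hD₃ : 0 < D₃) (hD₄ : 0 < D₄)
    (hD₂ : D₂ < 0) (hdet : 0 < D₁ * D₃ - D₂ ^ 2) :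
    ∃ t s : ℝ, 1 < t ∧ 0 < s ∧
      t ^ (2 - p) * D₁ = t ^ p * D₁ + s ^ p * D₂ ∧
      s ^ (2 - p) * D₄ = s ^ p * D₃ + t ^ p * D₂ := by
  have hp0 : (0:ℝ) < p := by linarith
  have hD₂' : (0:ℝ) < -D₂ := by linarith
  set c : ℝ := D₁ / (-D₂) with hc
  have hc0 : 0 < c := div_pos hD₁ hD₂'
  set q : ℝ := (2 - p) / p with hq
  have hq0 : 0 < q := div_pos (by linarith) hp0
  have hpq : p * q = 2 - p := by rw [hq]; field_simp
  set A : ℝ → ℝ := fun t => c * (t ^ p - t ^ (2 - p)) with hA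
  set g : ℝ → ℝ := fun t => (A t) ^ q * D₄ - A t * D₃ - t ^ p * D₂ with hg
  set ε : ℝ := c * D₃ + D₂ with hε
  have hε0 : 0 < ε := by
    have : c * D₃ = D₁ * D₃ / (-D₂) := by rw [hc]; ring
    rw [hε, this]
    rw [div_add' _ _ _ hD₂'.ne']
    apply div_pos _ hD₂'
    nlinarith
  set K : ℝ := c ^ q * D₄ + c * D₃ with hK
  have hK0 : 0 < K := by positivity
  set T : ℝ := max 2 ((K / ε + 1) ^ (1 / (2 * p - 2))) with hT
  have hT1 : (1:ℝ) < T := lt_of_lt_of_le one_lt_two (le_max_left _ _)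
  have hT0 : (0:ℝ) < T := by linarith
  -- A is positive for t > 1
  have hApos : ∀ t : ℝ, 1 < t → 0 < A t := by
    intro t ht
    have h1 : t ^ (2 - p) < t ^ p := by
      apply Real.rpow_lt_rpow_left_iff ht |>.mpr
      linarith
    have := sub_pos.mpr h1
    positivity
  -- g 1 = -D₂
  have hg1 : g 1 = -D₂ := by
    have hA1 : A 1 = 0 := by simp [hA]
    simp [hg, hA1, Real.zero_rpow hq0.ne']
  have hg1pos : 0 < g 1 := by rw [hg1]; linarith
  -- g T < 0
  have hgT : g T < 0 := by
    have hTe : 0 < 2 * p - 2 := by linarith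
    have hTb : (K / ε + 1) ^ (1 / (2 * p - 2)) ≤ T := le_max_right _ _
    have hb0 : (0:ℝ) ≤ K / ε + 1 := by positivity
    have hTpow : K / ε + 1 ≤ T ^ (2 * p - 2) := by
      calc K / ε + 1 = ((K / ε + 1) ^ (1 / (2 * p - 2))) ^ (2 * p - 2) := by
            rw [← Real.rpow_mul hb0, one_div_mul_cancel hTe.ne', Real.rpow_one]
        _ ≤ T ^ (2 * p - 2) := Real.rpow_le_rpow (Real.rpow_nonneg hb0 _) hTb hTe.le
    have hKlt : K < T ^ (2 * p - 2) * ε := by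
      have h1 : (K / ε + 1) * ε ≤ T ^ (2 * p - 2) * ε :=
        mul_le_mul_of_nonneg_right hTpow hε0.le
      have h2 : (K / ε + 1) * ε = K + ε := by
        rw [add_mul, div_mul_cancel₀ _ hε0.ne', one_mul]
      calc K < K + ε := by linarith
        _ = (K / ε + 1) * ε := h2.symm
        _ ≤ T ^ (2 * p - 2) * ε := h1
    -- bound (A T)^q
    have hAT_le : A T ≤ c * T ^ p := by
      have : (0:ℝ) ≤ T ^ (2 - p) := Real.rpow_nonneg hT0.le _
      have hATexp : A T = c * (T ^ p - T ^ (2 - p)) := rfl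
      nlinarith
    have hAT_nonneg : 0 ≤ A T := (hApos T hT1).le
    have hATq : (A T) ^ q ≤ c ^ q * T ^ (2 - p) := by
      calc (A T) ^ q ≤ (c * T ^ p) ^ q := Real.rpow_le_rpow hAT_nonneg hAT_le hq0.le
        _ = c ^ q * (T ^ p) ^ q := Real.mul_rpow hc0.le (Real.rpow_nonneg hT0.le _)
        _ = c ^ q * T ^ (2 - p) := by
            rw [← Real.rpow_mul hT0.le, hpq]
    have hsplit : T ^ p = T ^ (2 - p) * T ^ (2 * p - 2) := by
      rw [← Real.rpow_add hT0]; ring_nf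
    have hgTexp : g T = (A T) ^ q * D₄ - A T * D₃ - T ^ p * D₂ := rfl
    have hATexp : A T = c * (T ^ p - T ^ (2 - p)) := rfl
    have hT2p : 0 < T ^ (2 - p) := Real.rpow_pos_of_pos hT0 _
    have h3 : (A T) ^ q * D₄ ≤ c ^ q * T ^ (2 - p) * D₄ :=
      mul_le_mul_of_nonneg_right hATq hD₄.le
    have h4 : T ^ (2 - p) * T ^ (2 * p - 2) * ε = T ^ p * ε := by rw [← hsplit]
    have key : g T ≤ T ^ (2 - p) * (K - T ^ (2 * p - 2) * ε) := by
      rw [hgTexp, hATexp, hK, hε]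
      rw [hε] at h4
      nlinarith [h3, h4]
    have h5 : T ^ (2 - p) * (K - T ^ (2 * p - 2) * ε) < 0 :=
      mul_neg_of_pos_of_neg hT2p (by linarith)
    linarith
  -- continuity of g on [1, T]
  have hgcont : ContinuousOn g (Set.Icc 1 T) := by
    intro t ht
    have ht0 : t ≠ 0 := by
      have := ht.1; positivity
    have h1 : ContinuousAt (fun x : ℝ => x ^ p) t :=
      Real.continuousAt_rpow_const t p (Or.inl ht0)
    have h2 : ContinuousAt (fun x : ℝ => x ^ (2 - p)) t :=
      Real.continuousAt_rpow_const t (2 - p) (Or.inl ht0)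
    have hAc : ContinuousAt A t := by
      simpa [hA] using ((h1.sub h2).const_mul c)
    have hAq : ContinuousAt (fun x : ℝ => A x ^ q) t :=
      (Real.continuousAt_rpow_const (A t) q (Or.inr hq0.le)).comp hAc
    have hc1 : ContinuousAt (fun x : ℝ => A x ^ q * D₄) t := hAq.mul continuousAt_const
    have hc2 : ContinuousAt (fun x : ℝ => A x * D₃) t := hAc.mul continuousAt_const
    have hc3 : ContinuousAt (fun x : ℝ => x ^ p * D₂) t := h1.mul continuousAt_const
    exact ((hc1.sub hc2).sub hc3).continuousWithinAt
  -- IVT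
  have h0mem : (0:ℝ) ∈ Set.Icc (g T) (g 1) := ⟨hgT.le, hg1pos.le⟩
  obtain ⟨t, htmem, hgt⟩ := intermediate_value_Icc' hT1.le hgcont h0mem
  have ht1 : 1 < t := by
    rcases lt_or_eq_of_le htmem.1 with h | h
    · exact h
    · exfalso; rw [← h] at hgt; rw [hgt] at hg1pos; exact lt_irrefl 0 hg1pos
  have hAt : 0 < A t := hApos t ht1
  refine ⟨t, (A t) ^ (1 / p), ht1, Real.rpow_pos_of_pos hAt _, ?_, ?_⟩
  · have hsp : ((A t) ^ (1 / p)) ^ p = A t := by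
      rw [← Real.rpow_mul hAt.le, one_div_mul_cancel hp0.ne', Real.rpow_one]
    rw [hsp, hA]
    simp only [hc]
    field_simp
    field_simp [hD₂.ne]
    ring
  · have hsp : ((A t) ^ (1 / p)) ^ p = A t := by
      rw [← Real.rpow_mul hAt.le, one_div_mul_cancel hp0.ne', Real.rpow_one]
    have hsq : ((A t) ^ (1 / p)) ^ (2 - p) = (A t) ^ q := by
      rw [← Real.rpow_mul hAt.le, hq]
      congr 1
      field_simp
    rw [hsq, hsp]
    have : (A t) ^ q * D₄ - A t * D₃ - t ^ p * D₂ = 0 := hgt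
    linarith
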